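/- Let R be an infinite integral domain, n ≥ 2, and let p(x₁,...,xₙ) = c₀ + Σ_{i=1}^n c_i x_i be an affine polynomial function with c₁,...,cₙ ∈ R. Then p is n-ary associative if and only if p is one of: a constant; the projection x₁; the projection xₙ; c₀ + Σ x_i; or Σ ω^{i-1} x_i for some ω ∈ R with ω^{n-1} = 1 and (if ω ≠ 1) c₀ = 0. -/

import Mathlib

/-- Substituting `f` applied to the window `x_i, ..., x_{i+n-1}` into slot `i`
of `f` applied to the remaining outer variables among `x_1, ..., x_{2n-1}`. -/
def nestAt {R : Type*} (n : ℕ) (f : (Fin n → R) → R) (i : Fin n)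
    (x : Fin (2 * n - 1) → R) : R :=
  f (fun j =>
    if (j : ℕ) < (i : ℕ) then x ⟨j, by have := j.isLt; have := i.isLt; omega⟩
    else if (j : ℕ) = (i : ℕ) then
      f (fun k => x ⟨(i : ℕ) + (k : ℕ), by have := k.isLt; have := i.isLt; omega⟩)
    else x ⟨(j : ℕ) + n - 1, by have := j.isLt; have := i.isLt; omega⟩)

/-- `f` is `n`-ary associative: all the bracketings coincide. -/
def IsNAssoc {R : Type*} (n : ℕ) (f : (Fin n → R) → R) : Prop :=
  ∀ i j : Fin n, ∀ x : Fin (2 * n - 1) → R, nestAt n f i x = nestAt n f j x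


def coefA {R : Type*} [CommRing R] (n : ℕ) (c : Fin n → R) (i : Fin n)
    (m : Fin (2 * n - 1)) : R :=
  if h1 : (m : ℕ) < (i : ℕ) then c ⟨m, by have := i.isLt; omega⟩
  else if h2 : (m : ℕ) < (i : ℕ) + n then c i * c ⟨(m : ℕ) - (i : ℕ), by omega⟩
  else c ⟨(m : ℕ) - n + 1, by have := m.isLt; omega⟩

theorem nest_eval {R : Type*} [CommRing R] (n : ℕ) (c₀ : R) (c : Fin n → R)
    (i : Fin n) (x : Fin (2 * n - 1) → R) :
    nestAt n (fun x => c₀ + ∑ j, c j * x j) i x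
      = c₀ + c i * c₀ + ∑ m, coefA n c i m * x m := by
  classical
  set C : ℕ → R := fun j => if h : j < n then c ⟨j, h⟩ else 0 with hC
  set X : ℕ → R := fun m => if h : m < 2 * n - 1 then x ⟨m, h⟩ else 0 with hX
  have hiv : (i : ℕ) < n := i.isLt
  have hL : nestAt n (fun x => c₀ + ∑ j, c j * x j) i x
      = c₀ + ∑ j ∈ Finset.range n,
          (if j < (i : ℕ) then C j * X j
           else if j = (i : ℕ) then C (i : ℕ) * c₀ + ∑ k ∈ Finset.range n, C (i:ℕ) * C k * X ((i:ℕ) + k)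
           else C j * X (j + n - 1)) := by
    show c₀ + ∑ j : Fin n, c j * _ = _
    congr 1
    rw [← Fin.sum_univ_eq_sum_range (fun j =>
      if j < (i : ℕ) then C j * X j
      else if j = (i : ℕ) then C (i : ℕ) * c₀ + ∑ k ∈ Finset.range n, C (i:ℕ) * C k * X ((i:ℕ) + k)
      else C j * X (j + n - 1))]
    refine Finset.sum_congr rfl fun j _ => ?_
    rcases lt_trichotomy (j : ℕ) (i : ℕ) with h | h | h
    · have hj2 : (j : ℕ) < 2 * n - 1 := by omega
      simp only [if_pos h, hC, hX, dif_pos j.isLt, dif_pos hj2, Fin.eta]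
    · obtain rfl : j = i := Fin.ext h
      have hk : ∀ k : Fin n, (j : ℕ) + (k : ℕ) < 2 * n - 1 := fun k => by
        have := k.isLt; omega
      have hciL : C (j:ℕ) = c j := by simp only [hC, dif_pos hiv, Fin.eta]
      rw [if_neg (lt_irrefl _), if_pos rfl, if_neg (lt_irrefl _), if_pos rfl, mul_add, hciL]
      congr 1
      rw [Finset.mul_sum, ← Fin.sum_univ_eq_sum_range (fun k =>
        c j * C k * X ((j:ℕ) + k))]
      refine Finset.sum_congr rfl fun k _ => ?_
      simp only [hC, hX, dif_pos k.isLt, dif_pos (hk k), Fin.eta]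
      ring
    · have hj2 : (j : ℕ) + n - 1 < 2 * n - 1 := by have := j.isLt; omega
      simp only [if_neg (by omega : ¬ (j:ℕ) < (i:ℕ)), if_neg (by omega : ¬ (j:ℕ) = (i:ℕ)),
        hC, hX, dif_pos j.isLt, dif_pos hj2, Fin.eta]
  have hR : ∑ m, coefA n c i m * x m
      = ∑ m ∈ Finset.range (2 * n - 1),
          (if m < (i : ℕ) then C m * X m
           else if m < (i : ℕ) + n then C (i:ℕ) * C (m - (i:ℕ)) * X m
           else C (m - n + 1) * X m) := by
    rw [← Fin.sum_univ_eq_sum_range (fun m =>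
      if m < (i : ℕ) then C m * X m
      else if m < (i : ℕ) + n then C (i:ℕ) * C (m - (i:ℕ)) * X m
      else C (m - n + 1) * X m)]
    refine Finset.sum_congr rfl fun m _ => ?_
    unfold coefA
    have hm := m.isLt
    split_ifs with h1 h2
    · simp only [hC, hX, dif_pos (by omega : (m:ℕ) < n), dif_pos hm, Fin.eta]
    · simp only [hC, hX, dif_pos hiv, dif_pos (by omega : (m:ℕ) - (i:ℕ) < n), dif_pos hm, Fin.eta]
    · simp only [hC, hX, dif_pos (by omega : (m:ℕ) - n + 1 < n), dif_pos hm, Fin.eta]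
  rw [hL, hR]
  have hci : C (i : ℕ) = c i := by simp only [hC, dif_pos hiv, Fin.eta]
  rw [Finset.range_eq_Ico, Finset.range_eq_Ico]
  rw [← Finset.sum_Ico_consecutive _ (by omega : 0 ≤ (i:ℕ)+n) (by omega : (i:ℕ)+n ≤ 2*n-1)]
  rw [← Finset.sum_Ico_consecutive _ (Nat.zero_le (i:ℕ)) (by omega : (i:ℕ) ≤ (i:ℕ)+n)]
  rw [← Finset.sum_Ico_consecutive _ (Nat.zero_le (i:ℕ)) (le_of_lt hiv)]
  rw [← Finset.sum_Ico_consecutive _ (by omega : (i:ℕ) ≤ (i:ℕ)+1) (by omega : (i:ℕ)+1 ≤ n)]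
  have p1 : ∀ f : ℕ → R, (∑ j ∈ Finset.Ico 0 (i:ℕ),
      (if j < (i:ℕ) then C j * X j
       else if j = (i:ℕ) then f j else C j * X (j + n - 1)))
      = ∑ j ∈ Finset.Ico 0 (i:ℕ), C j * X j := by
    intro f
    refine Finset.sum_congr rfl fun j hj => ?_
    rw [Finset.mem_Ico] at hj
    rw [if_pos hj.2]
  have p2 : (∑ j ∈ Finset.Ico (i:ℕ) ((i:ℕ)+1),
      (if j < (i:ℕ) then C j * X j
       else if j = (i:ℕ) then C (i:ℕ) * c₀ + ∑ k ∈ Finset.Ico 0 n, C (i:ℕ) * C k * X ((i:ℕ) + k)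
       else C j * X (j + n - 1)))
      = C (i:ℕ) * c₀ + ∑ k ∈ Finset.Ico 0 n, C (i:ℕ) * C k * X ((i:ℕ) + k) := by
    rw [Finset.sum_Ico_eq_sum_range]
    simp
  have p3 : ∀ f : ℕ → R, (∑ j ∈ Finset.Ico ((i:ℕ)+1) n,
      (if j < (i:ℕ) then C j * X j
       else if j = (i:ℕ) then f j
       else C j * X (j + n - 1)))
      = ∑ k ∈ Finset.range (n - ((i:ℕ)+1)), C ((i:ℕ)+1+k) * X ((i:ℕ)+1+k + n - 1) := by
    intro f
    rw [Finset.sum_Ico_eq_sum_range]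
    refine Finset.sum_congr rfl fun k hk => ?_
    rw [if_neg (by omega), if_neg (by omega)]
  have q1 : (∑ m ∈ Finset.Ico 0 (i:ℕ),
      (if m < (i:ℕ) then C m * X m
       else if m < (i:ℕ) + n then C (i:ℕ) * C (m - (i:ℕ)) * X m else C (m - n + 1) * X m))
      = ∑ j ∈ Finset.Ico 0 (i:ℕ), C j * X j := by
    refine Finset.sum_congr rfl fun j hj => ?_
    rw [Finset.mem_Ico] at hj
    rw [if_pos hj.2]
  have q2 : (∑ m ∈ Finset.Ico (i:ℕ) ((i:ℕ)+n),
      (if m < (i:ℕ) then C m * X m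
       else if m < (i:ℕ) + n then C (i:ℕ) * C (m - (i:ℕ)) * X m else C (m - n + 1) * X m))
      = ∑ k ∈ Finset.Ico 0 n, C (i:ℕ) * C k * X ((i:ℕ) + k) := by
    rw [Finset.sum_Ico_eq_sum_range]
    have hrr : (i:ℕ) + n - (i:ℕ) = n := by omega
    rw [hrr, Finset.range_eq_Ico]
    refine Finset.sum_congr rfl fun k hk => ?_
    rw [Finset.mem_Ico] at hk
    rw [if_neg (by omega), if_pos (by omega)]
    have e1 : (i:ℕ) + k - (i:ℕ) = k := by omega
    rw [e1]
  have q3 : (∑ m ∈ Finset.Ico ((i:ℕ)+n) (2*n-1),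
      (if m < (i:ℕ) then C m * X m
       else if m < (i:ℕ) + n then C (i:ℕ) * C (m - (i:ℕ)) * X m else C (m - n + 1) * X m))
      = ∑ k ∈ Finset.range (n - ((i:ℕ)+1)), C ((i:ℕ)+1+k) * X ((i:ℕ)+1+k + n - 1) := by
    rw [Finset.sum_Ico_eq_sum_range]
    have hrr : 2*n-1 - ((i:ℕ)+n) = n - ((i:ℕ)+1) := by omega
    rw [hrr]
    refine Finset.sum_congr rfl fun k hk => ?_
    rw [Finset.mem_range] at hk
    rw [if_neg (by omega), if_neg (by omega)]
    have e1 : (i:ℕ) + n + k - n + 1 = (i:ℕ) + 1 + k := by omega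
    have e2 : (i:ℕ) + n + k = (i:ℕ) + 1 + k + n - 1 := by omega
    rw [e1, e2]
  rw [p1, p2, p3, q1, q2, q3, hci]
  ring

lemma cmk {R : Type*} {n : ℕ} (c : Fin n → R) {a b : ℕ} (ha : a < n) (hb : b < n)
    (h : a = b) : c ⟨a, ha⟩ = c ⟨b, hb⟩ := by subst h; rfl

lemma coefA_lt {R : Type*} [CommRing R] {n : ℕ} (c : Fin n → R) (i : Fin n)
    (m : Fin (2 * n - 1)) (h : (m : ℕ) < (i : ℕ)) :
    coefA n c i m = c ⟨(m : ℕ), lt_trans h i.isLt⟩ := by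
  unfold coefA; rw [dif_pos h]

lemma coefA_mid {R : Type*} [CommRing R] {n : ℕ} (c : Fin n → R) (i : Fin n)
    (m : Fin (2 * n - 1)) (h1 : (i : ℕ) ≤ (m : ℕ)) (h2 : (m : ℕ) < (i : ℕ) + n) :
    coefA n c i m = c i * c ⟨(m : ℕ) - (i : ℕ), by omega⟩ := by
  unfold coefA; rw [dif_neg (by omega), dif_pos h2]

lemma coefA_ge {R : Type*} [CommRing R] {n : ℕ} (c : Fin n → R) (i : Fin n)
    (m : Fin (2 * n - 1)) (h : (i : ℕ) + n ≤ (m : ℕ)) :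
    coefA n c i m = c ⟨(m : ℕ) - n + 1, by have := m.isLt; omega⟩ := by
  unfold coefA; rw [dif_neg (by omega), dif_neg (by omega)]

lemma single_sum {R : Type*} [CommRing R] {N : ℕ} (A : Fin N → R) (m : Fin N) :
    ∑ m', A m' * (Pi.single m (1 : R) : Fin N → R) m' = A m := by
  classical
  simp [Pi.single_apply, mul_ite, Finset.sum_ite_eq']

lemma extract {R : Type*} [CommRing R] (n : ℕ) (c₀ : R) (c : Fin n → R)
    (h : IsNAssoc n (fun x => c₀ + ∑ i, c i * x i)) :
    (∀ i j : Fin n, c i * c₀ = c j * c₀) ∧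
      ∀ (i j : Fin n) (m : Fin (2 * n - 1)), coefA n c i m = coefA n c j m := by
  classical
  have hconst : ∀ i j : Fin n, c i * c₀ = c j * c₀ := by
    intro i j
    have h0 := h i j (fun _ => 0)
    rw [nest_eval, nest_eval] at h0
    simp only [mul_zero, Finset.sum_const_zero, add_zero] at h0
    exact add_left_cancel h0
  refine ⟨hconst, fun i j m => ?_⟩
  have h1 := h i j (Pi.single m 1)
  rw [nest_eval, nest_eval] at h1
  rw [single_sum (coefA n c i) m, single_sum (coefA n c j) m, hconst i j] at h1
  exact add_left_cancel h1

lemma xmk {R : Type*} {N : ℕ} (x : Fin N → R) {a b : ℕ} (h : a = b) (ha : a < N) :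
    x ⟨a, ha⟩ = x ⟨b, h ▸ ha⟩ := by subst h; rfl

lemma cmk' {R : Type*} {n : ℕ} (c : Fin n → R) {a b : ℕ} (h : a = b) (ha : a < n) :
    c ⟨a, ha⟩ = c ⟨b, h ▸ ha⟩ := by subst h; rfl

lemma coefA_eval {R : Type*} [CommRing R] {n : ℕ} (c : Fin n → R) {a b : ℕ}
    (ha : a < n) (hb : b < 2 * n - 1) :
    coefA n c ⟨a, ha⟩ ⟨b, hb⟩ =
      if _h1 : b < a then c ⟨b, by omega⟩
      else if _h2 : b < a + n then c ⟨a, ha⟩ * c ⟨b - a, by omega⟩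
      else c ⟨b - n + 1, by omega⟩ := rfl

lemma assoc_proj0 {R : Type*} (n : ℕ) (hn : 2 ≤ n) :
    IsNAssoc n (fun y : Fin n → R => y ⟨0, Nat.lt_of_lt_of_le (by norm_num) hn⟩) := by
  have key : ∀ (i : Fin n) (x : Fin (2*n-1) → R),
      nestAt n (fun y : Fin n → R => y ⟨0, by omega⟩) i x = x ⟨0, by omega⟩ := by
    intro i x
    simp only [nestAt, Fin.val_mk]
    split_ifs with h1 h2
    · rfl
    · exact xmk x (by omega) _
    · omega
  intro i j x
  rw [key, key]

lemma assoc_projlast {R : Type*} (n : ℕ) (hn : 2 ≤ n) :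
    IsNAssoc n (fun y : Fin n → R => y ⟨n - 1, Nat.sub_lt (Nat.lt_of_lt_of_le (by norm_num) hn) Nat.one_pos⟩) := by
  have key : ∀ (i : Fin n) (x : Fin (2*n-1) → R),
      nestAt n (fun y : Fin n → R => y ⟨n - 1, by omega⟩) i x
        = x ⟨n - 1 + (n - 1), by omega⟩ := by
    intro i x
    have hi := i.isLt
    simp only [nestAt, Fin.val_mk]
    split_ifs with h1 h2
    · omega
    · exact xmk x (by omega) _
    · exact xmk x (by omega) _
  intro i j x
  rw [key, key]

lemma coefA_pow {R : Type*} [CommRing R] {n : ℕ} (ω : R) (hw : ω ^ (n - 1) = 1)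
    (i : Fin n) (m : Fin (2 * n - 1)) :
    coefA n (fun i : Fin n => ω ^ (i : ℕ)) i m = ω ^ (m : ℕ) := by
  have hm := m.isLt
  have hi := i.isLt
  unfold coefA
  split_ifs with h1 h2
  · rfl
  · show ω ^ (i : ℕ) * ω ^ ((m : ℕ) - (i : ℕ)) = ω ^ (m : ℕ)
    rw [← pow_add]
    congr 1
    omega
  · show ω ^ ((m : ℕ) - n + 1) = ω ^ (m : ℕ)
    calc ω ^ ((m:ℕ) - n + 1) = ω ^ ((m:ℕ) - n + 1) * ω ^ (n - 1) := by rw [hw, mul_one]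
      _ = ω ^ ((m:ℕ) - n + 1 + (n - 1)) := (pow_add ω _ _).symm
      _ = ω ^ (m:ℕ) := by congr 1; omega

lemma assoc_affine {R : Type*} [CommRing R] (n : ℕ) (k ω : R) (hw : ω ^ (n - 1) = 1)
    (hc : ∀ i j : Fin n, ω ^ (i : ℕ) * k = ω ^ (j : ℕ) * k) :
    IsNAssoc n (fun x => k + ∑ i : Fin n, ω ^ (i : ℕ) * x i) := by
  intro i j x
  rw [show (fun x : Fin n → R => k + ∑ i : Fin n, ω ^ (i : ℕ) * x i)
      = fun x => k + ∑ i' : Fin n, (fun i'' : Fin n => ω ^ (i'' : ℕ)) i' * x i' from rfl]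
  rw [nest_eval, nest_eval]
  congr 1
  · show k + ω ^ (i : ℕ) * k = k + ω ^ (j : ℕ) * k
    rw [hc i j]
  · refine Finset.sum_congr rfl fun m _ => ?_
    rw [coefA_pow ω hw, coefA_pow ω hw]

theorem stmt_9 {R : Type*} [CommRing R] [IsDomain R] [Infinite R]
    (n : ℕ) (hn : 2 ≤ n) (c₀ : R) (c : Fin n → R)
    (p : (Fin n → R) → R) (hp : p = fun x => c₀ + ∑ i, c i * x i) :
    IsNAssoc n p ↔
      ((∃ k : R, p = fun _ => k) ∨
        (p = fun x => x ⟨0, by omega⟩) ∨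
        (p = fun x => x ⟨n - 1, by omega⟩) ∨
        (p = fun x => c₀ + ∑ i, x i) ∨
        (∃ ω : R, ω ^ (n - 1) = 1 ∧ (ω ≠ 1 → c₀ = 0) ∧
          p = fun x => ∑ i : Fin n, ω ^ i.val * x i)) := by
  subst hp
  have hn0 : 0 < n := by omega
  have hone : 1 < n := by omega
  have hlast : n - 1 < n := by omega
  constructor
  · -- forward direction
    intro h
    obtain ⟨C0, E⟩ := extract n c₀ c h
    -- the three families of scalar equations
    have A1 : ∀ (a : ℕ) (h1 : a + 1 < n),
        c ⟨a, by omega⟩ * c ⟨0, hn0⟩ = c ⟨a, by omega⟩ := by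
      intro a h1
      have hE := E ⟨a, by omega⟩ ⟨a + 1, h1⟩ ⟨a, by omega⟩
      rw [coefA_eval, coefA_eval, dif_neg (show ¬ a < a by omega),
        dif_pos (show a < a + n by omega), dif_pos (show a < a + 1 by omega)] at hE
      rw [cmk' c (show a - a = 0 by omega)] at hE
      exact hE
    have A2 : ∀ (a k : ℕ) (h1 : a + 1 < n) (hk1 : 1 ≤ k) (hk2 : k < n),
        c ⟨a, by omega⟩ * c ⟨k, hk2⟩ = c ⟨a + 1, h1⟩ * c ⟨k - 1, by omega⟩ := by
      intro a k h1 hk1 hk2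
      have hE := E ⟨a, by omega⟩ ⟨a + 1, h1⟩ ⟨a + k, by omega⟩
      rw [coefA_eval, coefA_eval, dif_neg (show ¬ a + k < a by omega),
        dif_pos (show a + k < a + n by omega), dif_neg (show ¬ a + k < a + 1 by omega),
        dif_pos (show a + k < a + 1 + n by omega)] at hE
      rw [cmk' c (show a + k - a = k by omega), cmk' c (show a + k - (a + 1) = k - 1 by omega)] at hE
      exact hE
    have A3 : ∀ (a : ℕ) (h1 : a + 1 < n),
        c ⟨a + 1, h1⟩ * c ⟨n - 1, hlast⟩ = c ⟨a + 1, h1⟩ := by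
      intro a h1
      have hE := E ⟨a, by omega⟩ ⟨a + 1, h1⟩ ⟨a + n, by omega⟩
      rw [coefA_eval, coefA_eval, dif_neg (show ¬ a + n < a by omega),
        dif_neg (show ¬ a + n < a + n by omega), dif_neg (show ¬ a + n < a + 1 by omega),
        dif_pos (show a + n < a + 1 + n by omega)] at hE
      rw [cmk' c (show a + n - n + 1 = a + 1 by omega),
        cmk' c (show a + n - (a + 1) = n - 1 by omega)] at hE
      exact hE.symm
    by_cases hz : c ⟨0, hn0⟩ = 0
    · -- first coefficient zero: all but the last coefficient vanish
      have hsmall : ∀ (a : ℕ) (h1 : a + 1 < n), c ⟨a, by omega⟩ = 0 := by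
        intro a h1
        have := A1 a h1
        rw [hz, mul_zero] at this
        exact this.symm
      by_cases hl : c ⟨n - 1, hlast⟩ = 0
      · -- constant
        have hall : ∀ i : Fin n, c i = 0 := by
          intro i
          rcases Nat.lt_or_ge (i.val + 1) n with hi | hi
          · have e : i = ⟨i.val, Nat.lt_of_succ_lt hi⟩ := Fin.ext rfl
            rw [e]
            exact hsmall i.val hi
          · have e : i = ⟨n - 1, hlast⟩ := Fin.ext (show i.val = n - 1 by have := i.isLt; omega)
            rw [e]
            exact hl
        left
        exact ⟨c₀, by funext x; simp [hall]⟩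
      · -- projection on the last coordinate
        have h3 := A3 (n - 2) (by omega)
        rw [cmk' c (show n - 2 + 1 = n - 1 by omega)] at h3
        have hl1 : c ⟨n - 1, hlast⟩ = 1 := by
          refine mul_left_cancel₀ hl ?_
          rw [mul_one]
          exact h3
        have hc0 : c₀ = 0 := by
          have := C0 ⟨0, hn0⟩ ⟨n - 1, hlast⟩
          rw [hz, hl1, zero_mul, one_mul] at this
          exact this.symm
        right; right; left
        funext x
        have hcoefs : ∀ i : Fin n, c i = if i = ⟨n - 1, hlast⟩ then 1 else 0 := by
          intro i
          by_cases hil : i = ⟨n - 1, hlast⟩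
          · rw [if_pos hil, hil, hl1]
          · rw [if_neg hil]
            have hiv : i.val + 1 < n := by
              have := i.isLt
              have : i.val ≠ n - 1 := fun hh => hil (Fin.ext hh)
              omega
            have e : i = ⟨i.val, Nat.lt_of_succ_lt hiv⟩ := Fin.ext rfl
            rw [e]
            exact hsmall i.val hiv
        rw [hc0, zero_add]
        calc ∑ i, c i * x i = ∑ i, if i = ⟨n - 1, hlast⟩ then x i else 0 := by
              refine Finset.sum_congr rfl fun i _ => ?_
              rw [hcoefs i]
              split_ifs <;> simp
          _ = x ⟨n - 1, hlast⟩ := by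
              rw [Finset.sum_ite_eq']
              simp
    · -- first coefficient nonzero: geometric coefficients
      have hz1 : c ⟨0, hn0⟩ = 1 := by
        refine mul_left_cancel₀ hz ?_
        rw [mul_one]
        exact A1 0 (by omega)
      set ω : R := c ⟨1, hone⟩ with hωd
      have hpow : ∀ (a : ℕ) (ha : a < n), c ⟨a, ha⟩ = ω ^ a := by
        intro a
        induction a with
        | zero => intro ha; rw [pow_zero]; exact hz1
        | succ a ih =>
          intro ha
          have ha' : a < n := by omega
          have h2 := A2 a 1 ha le_rfl hone
          rw [cmk' c (show 1 - 1 = 0 by omega)] at h2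
          calc c ⟨a + 1, ha⟩ = c ⟨a + 1, ha⟩ * c ⟨0, hn0⟩ := by rw [hz1, mul_one]
            _ = c ⟨a, ha'⟩ * c ⟨1, hone⟩ := h2.symm
            _ = ω ^ a * ω := by rw [ih ha', ← hωd]
            _ = ω ^ (a + 1) := (pow_succ ω a).symm
      by_cases hω0 : ω = 0
      · -- projection on the first coordinate
        have hc0 : c₀ = 0 := by
          have := C0 ⟨0, hn0⟩ ⟨1, hone⟩
          rw [hz1, one_mul, ← hωd, hω0, zero_mul] at this
          exact this
        right; left
        funext x
        have hcoefs : ∀ i : Fin n, c i = if i = ⟨0, hn0⟩ then 1 else 0 := by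
          intro i
          by_cases hil : i = ⟨0, hn0⟩
          · rw [if_pos hil, hil, hz1]
          · rw [if_neg hil]
            have hiv : i.val ≠ 0 := fun hh => hil (Fin.ext hh)
            have e : i = ⟨i.val, i.isLt⟩ := Fin.ext rfl
            rw [e, hpow i.val i.isLt, hω0]
            exact zero_pow hiv
        rw [hc0, zero_add]
        calc ∑ i, c i * x i = ∑ i, if i = ⟨0, hn0⟩ then x i else 0 := by
              refine Finset.sum_congr rfl fun i _ => ?_
              rw [hcoefs i]
              split_ifs <;> simp
          _ = x ⟨0, hn0⟩ := by
              rw [Finset.sum_ite_eq']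
              simp
      · -- ω ≠ 0 : root-of-unity case
        have hwn : ω ^ (n - 1) = 1 := by
          refine mul_left_cancel₀ hω0 ?_
          rw [mul_one, hωd, ← hpow (n - 1) hlast]
          exact A3 0 (by omega)
        by_cases hω1 : ω = 1
        · right; right; right; left
          funext x
          congr 1
          refine Finset.sum_congr rfl fun i _ => ?_
          have e : i = ⟨i.val, i.isLt⟩ := Fin.ext rfl
          rw [e, hpow i.val i.isLt, hω1, one_pow, one_mul]
        · have hc0 : c₀ = 0 := by
            have hh := C0 ⟨0, hn0⟩ ⟨1, hone⟩
            rw [hz1, one_mul, ← hωd] at hh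
            have h5 : (1 - ω) * c₀ = 0 := by linear_combination hh
            rcases mul_eq_zero.mp h5 with h6 | h6
            · exact absurd (show ω = 1 by linear_combination -h6) hω1
            · exact h6
          right; right; right; right
          refine ⟨ω, hwn, fun _ => hc0, ?_⟩
          funext x
          rw [hc0, zero_add]
          refine Finset.sum_congr rfl fun i _ => ?_
          have e : i = ⟨i.val, i.isLt⟩ := Fin.ext rfl
          rw [e, hpow i.val i.isLt]
  · -- reverse direction
    intro hcases
    rcases hcases with ⟨k, hk⟩ | hk | hk | hk | ⟨ω, hw1, hw2, hk⟩
    · rw [hk]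
      intro i j x
      rfl
    · rw [hk]
      exact assoc_proj0 n hn
    · rw [hk]
      exact assoc_projlast n hn
    · rw [hk]
      rw [show (fun x : Fin n → R => c₀ + ∑ i, x i)
          = fun x => c₀ + ∑ i : Fin n, (1 : R) ^ (i : ℕ) * x i from by
        funext x; simp]
      exact assoc_affine n c₀ 1 (one_pow _) (fun i j => by simp)
    · rw [hk]
      rw [show (fun x : Fin n → R => ∑ i : Fin n, ω ^ i.val * x i)
          = fun x => (0 : R) + ∑ i : Fin n, ω ^ (i : ℕ) * x i from by
        funext x; simp]
      exact assoc_affine n 0 ω hw1 (fun i j => by simp)
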